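/- Let ν be a finite measure on a separable metric space E. If there exists a constant c > 0 such that ν(f²) ≤ c·ν(|f|)² for all f ∈ L²(ν), then the support of ν is a finite set. -/

import Mathlib

open MeasureTheory Real

/-- The topological support of a measure: points all of whose open neighborhoods
have positive measure. -/
def measSupport {E : Type*} [TopologicalSpace E] [MeasurableSpace E]
    (ν : Measure E) : Set E :=
  {x : E | ∀ U : Set E, IsOpen U → x ∈ U → 0 < ν U}

theorem stmt_3 {E : Type*} [MetricSpace E] [TopologicalSpace.SeparableSpace E]
    [MeasurableSpace E] [BorelSpace E] (ν : Measure E) [IsFiniteMeasure ν]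
    (c : ℝ) (hc : 0 < c)
    (hineq : ∀ f : E → ℝ, MeasureTheory.MemLp f 2 ν →
      ∫ x, f x ^ 2 ∂ν ≤ c * (∫ x, |f x| ∂ν) ^ 2) :
    (measSupport ν).Finite := by
  -- Step 1: every open set containing a support point has measure at least 1/c.
  have hU : ∀ x ∈ measSupport ν, ∀ U : Set E, IsOpen U → x ∈ U →
      ENNReal.ofReal (1 / c) ≤ ν U := by
    intro x hx U hUo hxU
    have hpos := hx U hUo hxU
    have hmeas : MeasurableSet U := hUo.measurableSet
    set f : E → ℝ := U.indicator 1 with hf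
    have hmem : MemLp f 2 ν := memLp_indicator_const 2 hmeas 1 (Or.inr (measure_ne_top ν U))
    have hval : ∀ y, f y = 0 ∨ f y = 1 := by
      intro y
      by_cases h : y ∈ U
      · right; simp [hf, h]
      · left; simp [hf, h]
    have hsq : ∀ y, f y ^ 2 = f y := by
      intro y; rcases hval y with h | h <;> rw [h] <;> norm_num
    have habs : ∀ y, |f y| = f y := by
      intro y; rcases hval y with h | h <;> rw [h] <;> norm_num
    have hint : ∫ y, f y ∂ν = (ν U).toReal := by
      simp [hf, integral_indicator_one hmeas]; rfl
    have h2 := hineq f hmem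
    rw [show (fun y => f y ^ 2) = f from funext hsq] at h2
    simp only [habs] at h2
    rw [hint] at h2
    have htop : (ν U).toReal ≠ 0 := (ENNReal.toReal_pos hpos.ne' (measure_ne_top ν U)).ne'
    have hposr : 0 < (ν U).toReal := ENNReal.toReal_pos hpos.ne' (measure_ne_top ν U)
    have hle : 1 / c ≤ (ν U).toReal := by
      rw [div_le_iff₀ hc] at *
      nlinarith
    exact ENNReal.ofReal_le_of_le_toReal hle
  -- Step 2: every support point is an atom of mass at least 1/c.
  have hatom : ∀ x ∈ measSupport ν, ENNReal.ofReal (1 / c) ≤ ν {x} := by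
    intro x hx
    have hball : ∀ n : ℕ, ENNReal.ofReal (1 / c) ≤ ν (Metric.ball x (1 / (n + 1))) := by
      intro n
      exact hU x hx _ Metric.isOpen_ball (Metric.mem_ball_self (by positivity))
    have hInter : (⋂ n : ℕ, Metric.ball x (1 / (n + 1 : ℝ))) = {x} := by
      ext y
      simp only [Set.mem_iInter, Metric.mem_ball, Set.mem_singleton_iff]
      constructor
      · intro h
        have : dist y x ≤ 0 := by
          by_contra hcon
          push_neg at hcon
          obtain ⟨n, hn⟩ := exists_nat_one_div_lt hcon
          exact absurd (h n) (not_lt.mpr hn.le)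
        exact dist_le_zero.mp this
      · intro h; subst h; intro n; simp [dist_self]; positivity
    have hanti : Antitone fun n : ℕ => Metric.ball x (1 / (n + 1 : ℝ)) := by
      intro m n hmn
      apply Metric.ball_subset_ball
      have h : (m : ℝ) + 1 ≤ n + 1 := by exact_mod_cast Nat.succ_le_succ hmn
      exact one_div_le_one_div_of_le (by positivity) h
    have hdir : Directed (· ⊇ ·) fun n : ℕ => Metric.ball x (1 / (n + 1 : ℝ)) :=
      hanti.directed_ge
    have := Directed.measure_iInter (μ := ν)
      (fun n => Metric.isOpen_ball.measurableSet.nullMeasurableSet) hdir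
      ⟨0, measure_ne_top ν _⟩
    rw [hInter] at this
    rw [this]
    exact le_iInf hball
  -- Step 3: the set of atoms of mass ≥ 1/c is finite.
  have hfin : Set.Finite {x : E | ENNReal.ofReal (1 / c) ≤ ν {x}} := by
    apply Measure.finite_const_le_meas_of_disjoint_iUnion ν
      (ε := ENNReal.ofReal (1 / c)) (by positivity)
      (As := fun x : E => {x}) (fun x => measurableSet_singleton x)
      (fun x y hxy => by simp [Function.onFun, hxy])
    exact ne_top_of_le_ne_top (measure_ne_top ν Set.univ) (measure_mono (Set.subset_univ _))
  exact hfin.subset fun x hx => hatom x hx
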